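/- The space Σ_n is simply connected: it is path-connected and every loop in Σ_n based at a'_1 is null-homotopic. -/

import Mathlib

/-- The underlying set of the finite space `Σ_n`: points `a i` (`i` mod `n`),
`a' j`, `b' j` (`j` mod `2n`), and `b i j`, `c i j` (`i` mod `n`, `j` mod `2n`). -/
inductive SigmaSpace (n : ℕ) : Type
  | a (i : ZMod n)
  | a' (j : ZMod (2 * n))
  | b' (j : ZMod (2 * n))
  | b (i : ZMod n) (j : ZMod (2 * n))
  | c (i : ZMod n) (j : ZMod (2 * n))

namespace SigmaSpace

/-- The generating basic open set `U_x` at each point `x` of `Σ_n`. -/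
def U {n : ℕ} : SigmaSpace n → Set (SigmaSpace n)
  | c i j => {c i j}
  | b i j => {c i (j - 1), b i j, c i j}
  | b' j => insert (b' j) {x | ∃ i, x = c i j}
  | a i => insert (a i) ({x | ∃ j, x = b i j} ∪ {x | ∃ j, x = c i j})
  | a' j => {a' j, b' (j - 1), b' j} ∪ {x | ∃ i, x = b i j ∨ x = c i (j - 1) ∨ x = c i j}

/-- `Σ_n` carries the topology generated by the sets `U_x`. -/
instance (n : ℕ) : TopologicalSpace (SigmaSpace n) :=
  TopologicalSpace.generateFrom (Set.range U)

end SigmaSpace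

/-! ### Generic auxiliary lemmas about specialization and homotopy -/

open unitInterval

section Generic

variable {X : Type*} {Y : Type*} [TopologicalSpace X] [TopologicalSpace Y]

lemma ifCont {f g : Y → X} (hf : Continuous f) (hg : Continuous g)
    (h : ∀ y, f y ⤳ g y) :
    Continuous (fun p : I × Y => if p.1 = 1 then g p.2 else f p.2) := by
  rw [continuous_def]
  intro V hV
  have key : (fun p : I × Y => if p.1 = 1 then g p.2 else f p.2) ⁻¹' V =
      (({1}ᶜ : Set I) ×ˢ (f ⁻¹' V)) ∪ ((Set.univ : Set I) ×ˢ (f ⁻¹' V ∩ g ⁻¹' V)) := by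
    ext ⟨s, t⟩
    by_cases hs : s = 1
    · subst hs
      simp only [Set.mem_preimage, if_pos rfl, Set.mem_union, Set.mem_prod, Set.mem_compl_iff,
        Set.mem_singleton_iff, Set.mem_univ, Set.mem_inter_iff, true_and, not_true_eq_false,
        false_and, false_or]
      rw [if_pos trivial]
      exact ⟨fun hgV => ⟨(h t).mem_open hV hgV, hgV⟩, fun hh => hh.2⟩
    · simp [hs]
      tauto
  rw [key]
  exact ((isOpen_compl_singleton).prod (hV.preimage hf)).union
    (isOpen_univ.prod ((hV.preimage hf).inter (hV.preimage hg)))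

/-- The "hop" path from a point to a point it specializes to. -/
noncomputable def hopPath {y x : X} (_ : y ⤳ x) : Path y x where
  toFun t := if t = 1 then x else y
  continuous_toFun := by
    have : Continuous fun t : I => (t, t) := continuous_id.prodMk continuous_id
    exact (ifCont (f := fun _ : I => y) (g := fun _ : I => x) continuous_const continuous_const
      (fun _ => ‹y ⤳ x›)).comp this
  source' := by norm_num
  target' := by norm_num

lemma hopPath_range {y x : X} (h : y ⤳ x) : Set.range (hopPath h) ⊆ {y, x} := by
  rintro w ⟨t, rfl⟩
  show (if t = 1 then x else y) ∈ _
  split <;> simp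

lemma homotopic_of_forall_specializes {u v : X} (p q : Path u v) (h : ∀ t, p t ⤳ q t) :
    p.Homotopic q := by
  refine ⟨⟨⟨⟨fun st => if st.1 = 1 then q st.2 else p st.2,
      ifCont p.continuous q.continuous h⟩, ?_, ?_⟩, ?_⟩⟩
  · intro t; norm_num
  · intro t; norm_num
  · intro t s hs
    rcases hs with rfl | rfl <;> simp

lemma ContinuousMap.homotopic_of_forall_specializes {f g : C(Y, X)} (h : ∀ y, f y ⤳ g y) :
    f.Homotopic g :=
  ⟨⟨⟨fun st => if st.1 = 1 then g st.2 else f st.2, ifCont f.continuous g.continuous h⟩,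
    by intro t; norm_num, by intro t; norm_num⟩⟩

/-- A set with a "top" point (whose open neighborhoods contain all of `A`) is contractible. -/
lemma contractibleSpace_of_top {A : Set X} {x0 : X} (hx0 : x0 ∈ A)
    (htop : ∀ W : Set X, IsOpen W → x0 ∈ W → A ⊆ W) : ContractibleSpace A := by
  have spec : ∀ y : A, (y : A) ⤳ (⟨x0, hx0⟩ : A) := by
    intro y
    rw [specializes_iff_forall_open]
    intro s hs hmem
    obtain ⟨t, ht, rfl⟩ := isOpen_induced_iff.1 hs
    exact htop t ht hmem (y.2)
  rw [contractible_iff_id_nullhomotopic]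
  exact ⟨⟨x0, hx0⟩, ContinuousMap.homotopic_of_forall_specializes (f := ContinuousMap.id A)
    (g := ContinuousMap.const A ⟨x0, hx0⟩) spec⟩

/-- Two paths with the same endpoints lying in a simply connected subset are homotopic. -/
lemma homotopic_of_mem_simplyConnected {A : Set X} [SimplyConnectedSpace A] {u v : X}
    (p q : Path u v) (hp : ∀ t, p t ∈ A) (hq : ∀ t, q t ∈ A) : p.Homotopic q := by
  have hu : u ∈ A := p.source ▸ hp 0
  have hv : v ∈ A := p.target ▸ hp 1
  let p' : Path (⟨u, hu⟩ : A) ⟨v, hv⟩ :=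
    ⟨⟨fun t => ⟨p t, hp t⟩, p.continuous.subtype_mk _⟩,
      Subtype.ext p.source, Subtype.ext p.target⟩
  let q' : Path (⟨u, hu⟩ : A) ⟨v, hv⟩ :=
    ⟨⟨fun t => ⟨q t, hq t⟩, q.continuous.subtype_mk _⟩,
      Subtype.ext q.source, Subtype.ext q.target⟩
  have h := (SimplyConnectedSpace.paths_homotopic p' q').map
    (f := (⟨Subtype.val, continuous_subtype_val⟩ : C(A, X)))
  have hp2 : p'.map (continuous_subtype_val (p := fun x => x ∈ A)) = p := by ext t; rfl
  have hq2 : q'.map (continuous_subtype_val (p := fun x => x ∈ A)) = q := by ext t; rfl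
  simpa [hp2, hq2] using h

end Generic

/-! ### Basic topology of `Σ_n` -/

namespace SigmaSpace

variable {n : ℕ}

lemma isOpen_U (x : SigmaSpace n) : IsOpen (U x) :=
  TopologicalSpace.GenerateOpen.basic _ ⟨x, rfl⟩

lemma mem_U_self (x : SigmaSpace n) : x ∈ U x := by
  cases x <;> simp [U]

lemma U_mono {z x : SigmaSpace n} (h : x ∈ U z) : U x ⊆ U z := by
  cases z with
  | c i j =>
    rcases h with rfl
    exact subset_rfl
  | b i j =>
    rcases h with rfl | rfl | rfl
    · exact fun w hw => by rcases hw with rfl; exact Or.inl rfl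
    · exact subset_rfl
    · exact fun w hw => by rcases hw with rfl; exact Or.inr (Or.inr rfl)
  | b' j =>
    rcases h with rfl | ⟨i, rfl⟩
    · exact subset_rfl
    · exact fun w hw => by rcases hw with rfl; exact Or.inr ⟨i, rfl⟩
  | a i =>
    rcases h with rfl | ⟨j, rfl⟩ | ⟨j, rfl⟩
    · exact subset_rfl
    · rintro w (rfl | rfl | rfl)
      · exact Or.inr (Or.inr ⟨j - 1, rfl⟩)
      · exact Or.inr (Or.inl ⟨j, rfl⟩)
      · exact Or.inr (Or.inr ⟨j, rfl⟩)
    · rintro w rfl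
      exact Or.inr (Or.inr ⟨j, rfl⟩)
  | a' j =>
    rcases h with (rfl | rfl | rfl) | ⟨i, rfl | rfl | rfl⟩
    · exact subset_rfl
    · rintro w (rfl | ⟨i, rfl⟩)
      · exact Or.inl (Or.inr (Or.inl rfl))
      · exact Or.inr ⟨i, Or.inr (Or.inl rfl)⟩
    · rintro w (rfl | ⟨i, rfl⟩)
      · exact Or.inl (Or.inr (Or.inr rfl))
      · exact Or.inr ⟨i, Or.inr (Or.inr rfl)⟩
    · rintro w (rfl | rfl | rfl)
      · exact Or.inr ⟨i, Or.inr (Or.inl rfl)⟩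
      · exact Or.inr ⟨i, Or.inl rfl⟩
      · exact Or.inr ⟨i, Or.inr (Or.inr rfl)⟩
    · rintro w rfl
      exact Or.inr ⟨i, Or.inr (Or.inl rfl)⟩
    · rintro w rfl
      exact Or.inr ⟨i, Or.inr (Or.inr rfl)⟩

lemma U_subset {x : SigmaSpace n} {W : Set (SigmaSpace n)} (hW : IsOpen W) (hx : x ∈ W) :
    U x ⊆ W := by
  revert hx
  have h : TopologicalSpace.GenerateOpen (Set.range (U (n := n))) W := hW
  clear hW
  induction h with
  | basic s hs => obtain ⟨z, rfl⟩ := hs; exact fun hx => U_mono hx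
  | univ => exact fun _ _ _ => trivial
  | inter s t _ _ ihs iht => exact fun hx => Set.subset_inter (ihs hx.1) (iht hx.2)
  | sUnion S _ ih =>
    rintro ⟨s, hsS, hxs⟩ w hw
    exact ⟨s, hsS, ih s hsS hxs hw⟩

lemma specializes_of_mem_U {x y : SigmaSpace n} (h : y ∈ U x) : y ⤳ x :=
  specializes_iff_forall_open.2 fun _ hs hx => U_subset hs hx h

lemma U_trans {x y z : SigmaSpace n} (h1 : y ∈ U x) (h2 : x ∈ U z) : y ∈ U z :=
  U_mono h2 h1

/-! #### membership lemmas -/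

lemma mem_b'_a' (j : ZMod (2*n)) : b' j ∈ U (a' j) := by simp [U]
lemma mem_b'_a'' {j j' : ZMod (2*n)} (e : j' = j + 1) : b' j ∈ U (a' j') := by
  subst e; exact Or.inl (Or.inr (Or.inl (by rw [add_sub_cancel_right])))
lemma mem_b_a' (i : ZMod n) (j : ZMod (2*n)) : b i j ∈ U (a' j) :=
  Or.inr ⟨i, Or.inl rfl⟩
lemma mem_b_a (i : ZMod n) (j : ZMod (2*n)) : b i j ∈ U (a i) := by simp [U]
lemma mem_c_b (i : ZMod n) (j : ZMod (2*n)) : c i j ∈ U (b i j) := by simp [U]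
lemma mem_c_b' {i : ZMod n} {j j' : ZMod (2*n)} (e : j' = j + 1) : c i j ∈ U (b i j') := by
  subst e; exact Or.inl (by rw [add_sub_cancel_right])
lemma mem_c_b'2 (i : ZMod n) (j : ZMod (2*n)) : c i j ∈ U (b' j) := by simp [U]
lemma mem_c_a' (i : ZMod n) (j : ZMod (2*n)) : c i j ∈ U (a' j) :=
  Or.inr ⟨i, Or.inr (Or.inr rfl)⟩
lemma mem_c_a'' {i : ZMod n} {j j' : ZMod (2*n)} (e : j' = j + 1) : c i j ∈ U (a' j') := by
  subst e; exact Or.inr ⟨i, Or.inr (Or.inl (by rw [add_sub_cancel_right]))⟩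
lemma mem_c_a (i : ZMod n) (j : ZMod (2*n)) : c i j ∈ U (a i) := by simp [U]

/-! ### The fundamental groupoid machinery -/

open CategoryTheory

attribute [local instance] Path.Homotopic.setoid

/-- Shorthand for objects of the fundamental groupoid. -/
abbrev mk' (x : SigmaSpace n) : FundamentalGroupoid (SigmaSpace n) := ⟨x⟩

lemma comp_lift' {a b c : SigmaSpace n} (p : Path a b) (q : Path b c) :
    (⟦p.trans q⟧ : _root_.Quotient (Path.Homotopic.setoid a c)) =
      @CategoryStruct.comp (FundamentalGroupoid (SigmaSpace n)) _ (mk' a) (mk' b) (mk' c)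
        ⟦p⟧ ⟦q⟧ := rfl

/-- The homotopy class of the hop path associated to `y ∈ U x`. -/
noncomputable def hopQ {x y : SigmaSpace n} (h : y ∈ U x) : mk' y ⟶ mk' x :=
  ⟦hopPath (specializes_of_mem_U h)⟧

lemma hopQ_self {x : SigmaSpace n} (h : x ∈ U x) : hopQ h = 𝟙 (mk' x) := by
  rw [FundamentalGroupoid.id_eq_path_refl]
  apply Quotient.sound
  have : hopPath (specializes_of_mem_U h) = Path.refl x := by
    ext t
    show (if t = 1 then x else x) = x
    simp
  rw [this]

lemma hopQ_trans {z y x : SigmaSpace n} (h1 : z ∈ U y) (h2 : y ∈ U x) (h3 : z ∈ U x) :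
    hopQ h3 = hopQ h1 ≫ hopQ h2 := by
  show _ = Path.Homotopic.Quotient.trans _ _
  unfold hopQ
  change _ = ⟦(hopPath (specializes_of_mem_U h1)).trans (hopPath (specializes_of_mem_U h2))⟧
  apply Quotient.sound
  apply homotopic_of_forall_specializes
  intro t
  by_cases ht : t = 1
  · subst ht
    have e1 : (hopPath (specializes_of_mem_U h3)) 1 = x := Path.target _
    have e2 : ((hopPath (specializes_of_mem_U h1)).trans
        (hopPath (specializes_of_mem_U h2))) 1 = x := Path.target _
    rw [e1, e2]
  · have e1 : (hopPath (specializes_of_mem_U h3)) t = z := if_neg ht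
    rw [e1]
    have : ((hopPath (specializes_of_mem_U h1)).trans (hopPath (specializes_of_mem_U h2))) t ∈
        Set.range ((hopPath (specializes_of_mem_U h1)).trans (hopPath (specializes_of_mem_U h2))) :=
      ⟨t, rfl⟩
    rw [Path.trans_range] at this
    rcases this with hmem | hmem
    · rcases hopPath_range _ hmem with h | h
      · rw [h]
      · rw [h]; exact specializes_of_mem_U h1
    · rcases hopPath_range _ hmem with h | h
      · rw [h]; exact specializes_of_mem_U h1
      · rw [h]; exact specializes_of_mem_U h3

/-- The connector from `m` to `m'` through a common lower point `y`. -/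
noncomputable def conn {y m m' : SigmaSpace n} (h1 : y ∈ U m) (h2 : y ∈ U m') :
    mk' m ⟶ mk' m' :=
  Groupoid.inv (hopQ h1) ≫ hopQ h2

lemma conn_trans {y m m' m'' : SigmaSpace n} (h1 : y ∈ U m) (h2 : y ∈ U m')
    (h3 : y ∈ U m'') : conn h1 h2 ≫ conn h2 h3 = conn h1 h3 := by
  simp [conn, Groupoid.inv_eq_inv]

lemma conn_eq {y y' m m' : SigmaSpace n} (hyy' : y ∈ U y') (h1 : y ∈ U m) (h2 : y ∈ U m')
    (h1' : y' ∈ U m) (h2' : y' ∈ U m') : conn h1 h2 = conn h1' h2' := by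
  have e1 : hopQ h1 = hopQ hyy' ≫ hopQ h1' := hopQ_trans hyy' h1' h1
  have e2 : hopQ h2 = hopQ hyy' ≫ hopQ h2' := hopQ_trans hyy' h2' h2
  rw [conn, conn, e1, e2]
  simp [Groupoid.inv_eq_inv]

/-- The edge of the `a'`-cycle. -/
noncomputable def Hh (j : ZMod (2*n)) : mk' (a' j) ⟶ mk' (a' (j + 1)) :=
  conn (mem_b'_a' j) (mem_b'_a'' rfl)

/-- The spoke edge from `a' j` to `a i`. -/
noncomputable def Dd (i : ZMod n) (j : ZMod (2*n)) : mk' (a' j) ⟶ mk' (a i) :=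
  conn (mem_b_a' i j) (mem_b_a i j)

/-- The fundamental triangle relation. -/
lemma star (i : ZMod n) (j : ZMod (2*n)) : Dd i j = Hh j ≫ Dd i (j + 1) := by
  have e1 : Dd i j = conn (mem_c_a' i j) (mem_c_a i j) :=
    (conn_eq (mem_c_b i j) (mem_c_a' i j) (mem_c_a i j) (mem_b_a' i j) (mem_b_a i j)).symm
  have e2 : conn (mem_c_a' i j) (mem_c_a i j) =
      conn (mem_c_a' i j) (mem_c_a'' (i := i) (j := j) rfl) ≫
      conn (mem_c_a'' (i := i) (j := j) rfl) (mem_c_a i j) :=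
    (conn_trans _ _ _).symm
  have e3 : conn (mem_c_a' i j) (mem_c_a'' (i := i) (j := j) rfl) = Hh j :=
    conn_eq (mem_c_b'2 i j) _ _ (mem_b'_a' j) (mem_b'_a'' rfl)
  have e4 : conn (mem_c_a'' (i := i) (j := j) rfl) (mem_c_a i j) = Dd i (j + 1) :=
    conn_eq (mem_c_b' (i := i) (j := j) rfl) _ _ (mem_b_a' i (j + 1)) (mem_b_a i (j + 1))
  rw [e1, e2, e3, e4]


lemma conn_self {y m : SigmaSpace n} (h : y ∈ U m) : conn h h = 𝟙 (mk' m) := by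
  simp [conn, Groupoid.inv_eq_inv]

/-- The comparison arrow between the spokes through `a 0` and `a i`. -/
noncomputable def Xarr (i : ZMod n) (j : ZMod (2*n)) : mk' (a (0 : ZMod n)) ⟶ mk' (a i) :=
  Groupoid.inv (Dd 0 j) ≫ Dd i j

lemma Xarr_step (i : ZMod n) (j : ZMod (2*n)) : Xarr i (j + 1) = Xarr i j := by
  rw [Xarr, Xarr, star 0 j, star i j]
  simp [Groupoid.inv_eq_inv]

lemma Xarr_const [NeZero n] (i : ZMod n) (j : ZMod (2*n)) : Xarr i j = Xarr i 1 := by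
  haveI : NeZero (2*n) := ⟨by have := NeZero.ne n; omega⟩
  have key : ∀ k : ℕ, Xarr i (1 + (k : ZMod (2*n))) = Xarr i 1 := by
    intro k
    induction k with
    | zero => norm_num
    | succ k ih =>
      have e : ((k+1 : ℕ) : ZMod (2*n)) = ((k : ℕ) : ZMod (2*n)) + 1 := by push_cast; ring
      rw [e, ← add_assoc, Xarr_step, ih]
  have hj : j = 1 + (((j - 1).val : ℕ) : ZMod (2*n)) := by
    rw [ZMod.natCast_rightInverse (j - 1)]; ring
  rw [hj, key]

/-- The canonical arrow from the basepoint to each point. -/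
noncomputable def psi : (y : SigmaSpace n) → (mk' (a' (1 : ZMod (2*n))) ⟶ mk' y)
  | a i => Dd i 1
  | a' j => Dd 0 1 ≫ Groupoid.inv (Dd 0 j)
  | b' j => (Dd 0 1 ≫ Groupoid.inv (Dd 0 j)) ≫ Groupoid.inv (hopQ (mem_b'_a' j))
  | b i j => Dd i 1 ≫ Groupoid.inv (hopQ (mem_b_a i j))
  | c i j => Dd i 1 ≫ Groupoid.inv (hopQ (mem_c_a i j))

lemma cyc (j : ZMod (2*n)) : psi (a' j) ≫ Hh j = psi (a' (j + 1)) := by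
  show (Dd 0 1 ≫ Groupoid.inv (Dd 0 j)) ≫ Hh j = Dd 0 1 ≫ Groupoid.inv (Dd 0 (j + 1))
  rw [star 0 j]
  simp [Groupoid.inv_eq_inv]

lemma dlem [NeZero n] (i : ZMod n) (j : ZMod (2*n)) : psi (a' j) ≫ Dd i j = psi (a i) := by
  show (Dd 0 1 ≫ Groupoid.inv (Dd 0 j)) ≫ Dd i j = Dd i 1
  rw [Category.assoc,
    show Groupoid.inv (Dd 0 j) ≫ Dd i j = Xarr i j from rfl, Xarr_const i j, Xarr]
  simp [Groupoid.inv_eq_inv]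

lemma psi_b_a' [NeZero n] (i : ZMod n) (j : ZMod (2*n)) (h : b i j ∈ U (a' j)) :
    psi (b i j) ≫ hopQ h = psi (a' j) := by
  show (Dd i 1 ≫ Groupoid.inv (hopQ (mem_b_a i j))) ≫ hopQ (mem_b_a' i j) = psi (a' j)
  rw [Category.assoc,
    show Groupoid.inv (hopQ (mem_b_a i j)) ≫ hopQ (mem_b_a' i j) =
      conn (mem_b_a i j) (mem_b_a' i j) from rfl]
  have h1 : Dd i j ≫ conn (mem_b_a i j) (mem_b_a' i j) = 𝟙 _ := by
    rw [Dd, conn_trans]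
    exact conn_self _
  rw [IsIso.eq_inv_of_hom_inv_id h1, show Dd i 1 = psi (a i) from rfl, ← dlem i j]
  simp

lemma psi_c_gen [NeZero n] (i : ZMod n) (j jb : ZMod (2*n)) (hcb : c i j ∈ U (b i jb))
    (hca' : c i j ∈ U (a' jb)) : psi (c i j) ≫ hopQ hca' = psi (a' jb) := by
  show (Dd i 1 ≫ Groupoid.inv (hopQ (mem_c_a i j))) ≫ hopQ hca' = psi (a' jb)
  rw [Category.assoc,
    show Groupoid.inv (hopQ (mem_c_a i j)) ≫ hopQ hca' = conn (mem_c_a i j) hca' from rfl,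
    conn_eq hcb (mem_c_a i j) hca' (mem_b_a i jb) (mem_b_a' i jb)]
  have h1 : Dd i jb ≫ conn (mem_b_a i jb) (mem_b_a' i jb) = 𝟙 _ := by
    rw [Dd, conn_trans]
    exact conn_self _
  rw [IsIso.eq_inv_of_hom_inv_id h1, show Dd i 1 = psi (a i) from rfl, ← dlem i jb]
  simp

lemma psi_b'_next (j0 j1 : ZMod (2*n)) (e : j1 = j0 + 1) (h : b' j0 ∈ U (a' j1)) :
    psi (b' j0) ≫ hopQ h = psi (a' j1) := by
  subst e
  have hC := cyc (n := n) j0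
  show (psi (a' j0) ≫ Groupoid.inv (hopQ (mem_b'_a' j0))) ≫ hopQ (mem_b'_a'' rfl) =
    psi (a' (j0 + 1))
  rw [← hC, Hh, conn]
  simp

/-- Master step lemma: hopping up to a maximal point is compatible with `psi`. -/
lemma psi_hop [NeZero n] {y m : SigmaSpace n}
    (hmax : (∃ i, m = a i) ∨ (∃ j, m = a' j)) (h : y ∈ U m) :
    psi y ≫ hopQ h = psi m := by
  rcases hmax with ⟨i, rfl⟩ | ⟨j, rfl⟩
  · rcases h with rfl | ⟨j, rfl⟩ | ⟨j, rfl⟩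
    · show psi (a i) ≫ hopQ (mem_U_self (a i)) = _
      rw [hopQ_self, Category.comp_id]
    · show (Dd i 1 ≫ Groupoid.inv (hopQ (mem_b_a i j))) ≫ hopQ (mem_b_a i j) = Dd i 1
      simp [Groupoid.inv_eq_inv]
    · show (Dd i 1 ≫ Groupoid.inv (hopQ (mem_c_a i j))) ≫ hopQ (mem_c_a i j) = Dd i 1
      simp [Groupoid.inv_eq_inv]
  · rcases h with (rfl | rfl | rfl) | ⟨i, rfl | rfl | rfl⟩
    · show psi (a' j) ≫ hopQ (mem_U_self (a' j)) = _
      rw [hopQ_self, Category.comp_id]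
    · exact psi_b'_next (j - 1) j (by ring) (mem_b'_a'' (by ring))
    · show (psi (a' j) ≫ Groupoid.inv (hopQ (mem_b'_a' j))) ≫ hopQ (mem_b'_a' j) = psi (a' j)
      simp [Groupoid.inv_eq_inv]
    · exact psi_b_a' i j (mem_b_a' i j)
    · exact psi_c_gen i (j - 1) j (mem_c_b' (by ring)) (mem_c_a'' (by ring))
    · exact psi_c_gen i j j (mem_c_b i j) (mem_c_a' i j)


/-! ### Reduction of arbitrary paths to fence paths -/

/-- A canonical maximal point above each point. -/
def maxOf : SigmaSpace n → SigmaSpace n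
  | a i => a i
  | a' j => a' j
  | b' j => a' j
  | b i j => a i
  | c i j => a i

lemma maxOf_max (x : SigmaSpace n) : (∃ i, maxOf x = a i) ∨ (∃ j, maxOf x = a' j) := by
  cases x <;> first
    | exact Or.inl ⟨_, rfl⟩
    | exact Or.inr ⟨_, rfl⟩

lemma mem_U_maxOf (x : SigmaSpace n) : x ∈ U (maxOf x) := by
  cases x <;> simp [U, maxOf]

lemma psi_eq [NeZero n] {y m : SigmaSpace n}
    (hmax : (∃ i, m = a i) ∨ (∃ j, m = a' j)) (h : y ∈ U m) :
    psi y = psi m ≫ inv (hopQ h) := by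
  rw [← psi_hop hmax h]
  simp

/-- Key lemma: the class of a path contained in a basic open set `U m` (`m` maximal)
is determined by its endpoints. -/
lemma leaf_step [NeZero n] {u v m : SigmaSpace n}
    (hmax : (∃ i, m = a i) ∨ (∃ j, m = a' j))
    (p : Path u v) (hp : ∀ t, p t ∈ U m) :
    (⟦p⟧ : mk' u ⟶ mk' v) = inv (psi u) ≫ psi v := by
  have hu : u ∈ U m := p.source ▸ hp 0
  have hv : v ∈ U m := p.target ▸ hp 1
  haveI : ContractibleSpace (U m) :=
    contractibleSpace_of_top (mem_U_self m) (fun W hW hm => U_subset hW hm)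
  set spike := (hopPath (specializes_of_mem_U hu)).trans
    (hopPath (specializes_of_mem_U hv)).symm with hsp
  have hmemspike : ∀ t, spike t ∈ U m := by
    intro t
    have hmem : spike t ∈ Set.range spike := ⟨t, rfl⟩
    rw [hsp, Path.trans_range] at hmem
    rcases hmem with hh | hh
    · rcases hopPath_range _ hh with e | e
      · rw [e]; exact hu
      · rw [e]; exact mem_U_self m
    · rw [Path.symm_range] at hh
      rcases hopPath_range _ hh with e | e
      · rw [e]; exact hv
      · rw [e]; exact mem_U_self m
  have h1 : p.Homotopic spike := homotopic_of_mem_simplyConnected p spike hp hmemspike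
  have h2 : (⟦p⟧ : mk' u ⟶ mk' v) = ⟦spike⟧ := Quotient.sound h1
  have h3 : (⟦spike⟧ : mk' u ⟶ mk' v) = hopQ hu ≫ Groupoid.inv (hopQ hv) :=
    Path.Homotopic.Quotient.mk_trans _ _
  rw [h2, h3, psi_eq hmax hu, psi_eq hmax hv]
  simp [Groupoid.inv_eq_inv]
  rfl

end SigmaSpace

/-! ### Dyadic subpaths (generic) -/

section SubPath

variable {X : Type*} [TopologicalSpace X] {x y : X}

lemma mem_I_mix (r s t : I) : (1 - (r : ℝ)) * s + r * t ∈ I := by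
  constructor
  · have h1 : (0:ℝ) ≤ 1 - r := by linarith [r.2.2]
    exact add_nonneg (mul_nonneg h1 s.2.1) (mul_nonneg r.2.1 t.2.1)
  · nlinarith [r.2.1, r.2.2, s.2.1, s.2.2, t.2.1, t.2.2]

/-- The affine subpath of `γ` from parameter `s` to parameter `t`. -/
noncomputable def subPath (γ : Path x y) (s t : I) : Path (γ s) (γ t) where
  toFun r := γ ⟨(1 - (r : ℝ)) * s + r * t, mem_I_mix r s t⟩
  continuous_toFun := by
    apply γ.continuous.comp
    apply Continuous.subtype_mk
    continuity
  source' := by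
    have e : (⟨(1 - (((0:I)) : ℝ)) * s + ((0:I) : ℝ) * t, mem_I_mix 0 s t⟩ : I) = s :=
      Subtype.ext (by simp)
    show γ _ = γ s
    rw [e]
  target' := by
    have e : (⟨(1 - (((1:I)) : ℝ)) * s + ((1:I) : ℝ) * t, mem_I_mix 1 s t⟩ : I) = t :=
      Subtype.ext (by simp)
    show γ _ = γ t
    rw [e]

lemma subPath_apply (γ : Path x y) (s t r : I) :
    (subPath γ s t) r = γ ⟨(1 - (r : ℝ)) * s + r * t, mem_I_mix r s t⟩ := rfl

lemma subPath_trans (γ : Path x y) (s t u : I) (hu : (u : ℝ) = ((s : ℝ) + t) / 2) :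
    (subPath γ s u).trans (subPath γ u t) = subPath γ s t := by
  ext r
  rw [Path.trans_apply]
  split_ifs with h
  · show γ _ = γ _
    congr 1
    apply Subtype.ext
    show (1 - (2 * (r:ℝ))) * s + (2 * (r:ℝ)) * u = (1 - (r:ℝ)) * s + r * t
    rw [hu]; ring
  · show γ _ = γ _
    congr 1
    apply Subtype.ext
    show (1 - (2 * (r:ℝ) - 1)) * u + (2 * (r:ℝ) - 1) * t = (1 - (r:ℝ)) * s + r * t
    rw [hu]; ring

lemma subPath_zero_one (γ : Path x y) : subPath γ 0 1 = γ.cast γ.source γ.target := by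
  ext r
  show γ _ = γ r
  congr 1
  apply Subtype.ext
  show (1 - (r:ℝ)) * ((0:I):ℝ) + r * ((1:I):ℝ) = r
  norm_num

end SubPath

namespace SigmaSpace

open CategoryTheory

attribute [local instance] Path.Homotopic.setoid

variable {n : ℕ}


/-! ### Path-connectivity -/

lemma joined_of_mem {x y : SigmaSpace n} (h : y ∈ U x) : Joined y x :=
  ⟨hopPath (specializes_of_mem_U h)⟩

lemma joined_a'_one [NeZero n] (j : ZMod (2*n)) : Joined (a' j : SigmaSpace n) (a' 1) := by
  haveI : NeZero (2*n) := ⟨by have := NeZero.ne n; omega⟩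
  have key : ∀ k : ℕ, Joined (a' (1 + (k : ZMod (2*n))) : SigmaSpace n) (a' 1) := by
    intro k
    induction k with
    | zero =>
      have e : ((0:ℕ) : ZMod (2*n)) = 0 := Nat.cast_zero
      rw [e, add_zero]
    | succ k ih =>
      have e : ((k+1:ℕ) : ZMod (2*n)) = ((k:ℕ) : ZMod (2*n)) + 1 := by push_cast; ring
      rw [e, ← add_assoc]
      exact ((joined_of_mem (mem_b'_a'' (j := 1 + ((k:ℕ) : ZMod (2*n))) rfl)).symm.trans
        (joined_of_mem (mem_b'_a' (1 + ((k:ℕ) : ZMod (2*n)))))).trans ih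
  have hj : j = 1 + (((j - 1).val : ℕ) : ZMod (2*n)) := by
    rw [ZMod.natCast_rightInverse (j - 1)]; ring
  rw [hj]
  exact key _

lemma joined_one [NeZero n] (x : SigmaSpace n) : Joined x (a' 1) := by
  have ha : ∀ i : ZMod n, Joined (a i : SigmaSpace n) (a' 1) := fun i =>
    (joined_of_mem (mem_b_a i 1)).symm.trans (joined_of_mem (mem_b_a' i 1))
  cases x with
  | a i => exact ha i
  | a' j => exact joined_a'_one j
  | b' j => exact (joined_of_mem (mem_b'_a' j)).trans (joined_a'_one j)
  | b i j => exact (joined_of_mem (mem_b_a i j)).trans (ha i)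
  | c i j => exact (joined_of_mem (mem_c_a i j)).trans (ha i)

/-! ### The main null-homotopy argument -/

lemma final_extract [NeZero n] {u v : SigmaSpace n} (p : Path u v)
    (hu : u = a' 1) (hv : v = a' 1)
    (h : (⟦p⟧ : mk' u ⟶ mk' v) = inv (psi u) ≫ psi v) :
    (p.cast hu.symm hv.symm).Homotopic (Path.refl (a' (1 : ZMod (2*n)))) := by
  subst hu
  subst hv
  have hc : p.cast rfl rfl = p := rfl
  rw [hc]
  have h2 : (⟦p⟧ : mk' (a' 1) ⟶ mk' (a' 1)) = ⟦Path.refl (a' (1 : ZMod (2*n)))⟧ := by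
    rw [h, IsIso.inv_hom_id]
    rfl
  exact Quotient.exact h2

lemma loops_null [NeZero n] (γ : Path (a' (1 : ZMod (2*n)) : SigmaSpace n) (a' 1)) :
    γ.Homotopic (Path.refl (a' 1)) := by
  obtain ⟨δ, δpos, hδ⟩ := lebesgue_number_lemma_of_metric (s := (Set.univ : Set I))
    (c := fun z : SigmaSpace n => γ ⁻¹' (U (maxOf z))) isCompact_univ
    (fun z => (isOpen_U _).preimage γ.continuous)
    (fun t _ => Set.mem_iUnion.2 ⟨γ t, mem_U_maxOf (γ t)⟩)
  obtain ⟨m, hm⟩ : ∃ m : ℕ, (1:ℝ) / 2 ^ m < δ := by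
    obtain ⟨m, hm⟩ := exists_pow_lt_of_lt_one δpos (by norm_num : (1:ℝ)/2 < 1)
    exact ⟨m, by rwa [div_pow, one_pow] at hm⟩
  set pt : ℕ → ℕ → I := fun k d =>
    ⟨min ((k : ℝ) / 2 ^ d) 1, ⟨le_min (by positivity) zero_le_one, min_le_right _ _⟩⟩ with hpt
  have ptval : ∀ k d : ℕ, k ≤ 2 ^ d → ((pt k d : I) : ℝ) = (k : ℝ) / 2 ^ d := by
    intro k d hk
    show min _ _ = _
    apply min_eq_left
    rw [div_le_one (by positivity)]
    exact_mod_cast hk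
  have main : ∀ r : ℕ, ∀ i : ℕ, i < 2 ^ (m - r) →
      (⟦subPath γ (pt i (m - r)) (pt (i + 1) (m - r))⟧ :
        mk' (γ (pt i (m - r))) ⟶ mk' (γ (pt (i + 1) (m - r)))) =
      inv (psi (γ (pt i (m - r)))) ≫ psi (γ (pt (i + 1) (m - r))) := by
    intro r
    induction r with
    | zero =>
      intro i hi
      simp only [Nat.sub_zero] at hi ⊢
      obtain ⟨z, hz⟩ := hδ (pt i m) (Set.mem_univ _)
      apply leaf_step (maxOf_max z)
      intro t
      rw [subPath_apply]
      apply hz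
      rw [Metric.mem_ball, Subtype.dist_eq, Real.dist_eq]
      have hiv := ptval i m (le_of_lt hi)
      have hiv1 := ptval (i+1) m hi
      show |((1 - (t:ℝ)) * (pt i m) + t * (pt (i+1) m)) - (pt i m)| < δ
      rw [hiv, hiv1]
      have e : (1 - (t:ℝ)) * ((i:ℝ)/2^m) + t * (((i+1:ℕ):ℝ)/2^m) - (i:ℝ)/2^m
          = t / 2^m := by
        push_cast
        field_simp
        ring
      rw [e, abs_of_nonneg (div_nonneg t.2.1 (by positivity))]
      calc (t:ℝ)/2^m ≤ 1/2^m := by gcongr; exact t.2.2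
        _ < δ := hm
    | succ r ih =>
      intro i hi
      by_cases hr : m ≤ r
      · have e : m - (r+1) = m - r := by omega
        rw [e] at hi ⊢
        exact ih i hi
      · push_neg at hr
        set d := m - (r + 1) with hd
        have hd1 : m - r = d + 1 := by omega
        rw [hd1] at ih
        have hle : i + 1 ≤ 2 ^ d := hi
        have hpow : 2 ^ (d+1) = 2 ^ d * 2 := pow_succ 2 d
        have e1 : pt i d = pt (2*i) (d+1) := by
          apply Subtype.ext
          show min ((i:ℝ)/2^d) 1 = min (((2*i:ℕ):ℝ)/2^(d+1)) 1
          congr 1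
          push_cast
          rw [pow_succ]
          field_simp
        have e2 : pt (i+1) d = pt (2*i+1+1) (d+1) := by
          apply Subtype.ext
          show min (((i+1:ℕ):ℝ)/2^d) 1 = min (((2*i+1+1:ℕ):ℝ)/2^(d+1)) 1
          congr 1
          push_cast
          rw [pow_succ]
          field_simp
          ring
        have e3 : ((pt (2*i+1) (d+1) : I) : ℝ) = (((pt i d : I):ℝ) + ((pt (i+1) d : I):ℝ)) / 2 := by
          rw [ptval i d (by omega), ptval (i+1) d hle, ptval (2*i+1) (d+1) (by omega)]
          push_cast
          rw [pow_succ]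
          field_simp
          ring
        have htr := subPath_trans γ (pt i d) (pt (i+1) d) (pt (2*i+1) (d+1)) e3
        rw [← htr]
        rw [comp_lift']
        have k1 := ih (2*i) (by omega)
        rw [← e1] at k1
        have k2 := ih (2*i+1) (by omega)
        rw [← e2] at k2
        rw [k1, k2]
        simp
        rfl
  have h0 := main m 0 (by rw [Nat.sub_self]; norm_num)
  rw [Nat.sub_self] at h0
  have ep0 : pt 0 0 = (0 : I) := by
    apply Subtype.ext
    show min _ _ = _
    norm_num
  have ep1 : pt 1 0 = (1 : I) := by
    apply Subtype.ext
    show min _ _ = _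
    norm_num
  rw [ep0, ep1, subPath_zero_one] at h0
  have hfin := final_extract (γ.cast γ.source γ.target) γ.source γ.target h0
  have hcc : (γ.cast γ.source γ.target).cast γ.source.symm γ.target.symm = γ := rfl
  rwa [hcc] at hfin

end SigmaSpace


/-- The space `Σ_n` is simply connected: it is path-connected and every
loop based at `a'_1` is null-homotopic (homotopic rel endpoints to the constant loop). -/
theorem sigmaSpace_simplyConnected (n : ℕ) (hn : 2 ≤ n) :
    PathConnectedSpace (SigmaSpace n) ∧
    ∀ γ : Path (SigmaSpace.a' (1 : ZMod (2 * n))) (SigmaSpace.a' 1),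
      γ.Homotopic (Path.refl (SigmaSpace.a' 1)) := by
  haveI : NeZero n := ⟨by omega⟩
  constructor
  · exact ⟨⟨SigmaSpace.a' 1⟩,
      fun x y => (SigmaSpace.joined_one x).trans (SigmaSpace.joined_one y).symm⟩
  · exact fun γ => SigmaSpace.loops_null γ
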